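/- Let F : ℝ² → ℝ³ be twice continuously differentiable, let x₀ ∈ ℝ³ and x̂₀ ∈ ℝ², set h = |F(x̂₀) − x₀|, and let J₀ = DF(x̂₀) denote the derivative of F at x̂₀. Assume the orthogonality condition (F(x̂₀) − x₀) · (J₀ v) = 0 for all v ∈ ℝ². Then there exist constants C > 0 and δ > 0 such that for all x̂ with |x̂ − x̂₀| ≤ δ, | |F(x̂) − x₀|² − |J₀(x̂ − x̂₀)|² − h² | ≤ C·(h + |x̂ − x̂₀|)·|x̂ − x̂₀|². -/

import Mathlib

open scoped InnerProductSpace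

set_option maxHeartbeats 1000000 in
/-- (Second-order expansion of the squared distance.)
Let `F : ℝ² → ℝ³` be C², `x₀ ∈ ℝ³`, `x̂₀ ∈ ℝ²`, `h = |F(x̂₀) − x₀|`, and
`J₀ = DF(x̂₀)`. If `(F(x̂₀) − x₀) · (J₀ v) = 0` for all `v ∈ ℝ²`, then there exist
`C > 0` and `δ > 0` such that for all `x̂` with `|x̂ − x̂₀| ≤ δ`,
`| |F(x̂) − x₀|² − |J₀(x̂ − x̂₀)|² − h² | ≤ C·(h + |x̂ − x̂₀|)·|x̂ − x̂₀|²`. -/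
theorem squared_distance_expansion
    (F : EuclideanSpace ℝ (Fin 2) → EuclideanSpace ℝ (Fin 3))
    (hF : ContDiff ℝ 2 F)
    (x₀ : EuclideanSpace ℝ (Fin 3)) (p₀ : EuclideanSpace ℝ (Fin 2))
    (h : ℝ) (hh : h = ‖F p₀ - x₀‖)
    (J₀ : EuclideanSpace ℝ (Fin 2) →L[ℝ] EuclideanSpace ℝ (Fin 3))
    (hJ₀ : J₀ = fderiv ℝ F p₀)
    (horth : ∀ v : EuclideanSpace ℝ (Fin 2), ⟪F p₀ - x₀, J₀ v⟫_ℝ = 0) :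
    ∃ C > 0, ∃ δ > 0, ∀ p : EuclideanSpace ℝ (Fin 2), ‖p - p₀‖ ≤ δ →
      |‖F p - x₀‖ ^ 2 - ‖J₀ (p - p₀)‖ ^ 2 - h ^ 2| ≤
        C * (h + ‖p - p₀‖) * ‖p - p₀‖ ^ 2 := by
  have hF1 : ContDiff ℝ 1 (fderiv ℝ F) := hF.fderiv_right (by norm_num)
  obtain ⟨K, hK0, hK⟩ : ∃ K ≥ 0, ∀ q ∈ Metric.closedBall p₀ 1,
      ‖fderiv ℝ (fderiv ℝ F) q‖ ≤ K := by
    obtain ⟨K, hK⟩ := (isCompact_closedBall p₀ 1).exists_bound_of_continuousOn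
      ((hF1.continuous_fderiv one_ne_zero).continuousOn)
    exact ⟨max K 0, le_max_right _ _, fun q hq => (hK q hq).trans (le_max_left _ _)⟩
  have hlip : ∀ p ∈ Metric.closedBall p₀ 1, ∀ q ∈ Metric.closedBall p₀ 1,
      ‖fderiv ℝ F p - fderiv ℝ F q‖ ≤ K * ‖p - q‖ := by
    intro p hp q hq
    exact (convex_closedBall p₀ 1).norm_image_sub_le_of_norm_hasFDerivWithin_le
      (fun z _ => ((hF1.differentiable one_ne_zero z).hasFDerivAt).hasFDerivWithinAt)
      (fun z hz => hK z hz) hq hp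
  refine ⟨K * (K + 2 * ‖J₀‖ + 2) + 1, by positivity, 1, one_pos, fun p hp => ?_⟩
  set t := ‖p - p₀‖ with ht
  have ht0 : 0 ≤ t := norm_nonneg _
  have hh0 : 0 ≤ h := hh ▸ norm_nonneg _
  set r : EuclideanSpace ℝ (Fin 3) := F p - F p₀ - (J₀ p - J₀ p₀) with hr
  have hrb : ‖r‖ ≤ K * t * t := by
    have hsub : Metric.closedBall p₀ t ⊆ Metric.closedBall p₀ 1 :=
      Metric.closedBall_subset_closedBall hp
    have hmem : p ∈ Metric.closedBall p₀ t := by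
      rw [Metric.mem_closedBall, dist_eq_norm]
    have key := (convex_closedBall p₀ t).norm_image_sub_le_of_norm_hasFDerivWithin_le
      (f := fun q => F q - J₀ q) (f' := fun q => fderiv ℝ F q - J₀) (C := K * t)
      (fun z _ => (((hF.differentiable (by norm_num) z).hasFDerivAt).sub
        J₀.hasFDerivAt).hasFDerivWithinAt)
      (fun z hz => by
        show ‖fderiv ℝ F z - J₀‖ ≤ K * t
        have h1 : ‖fderiv ℝ F z - J₀‖ ≤ K * ‖z - p₀‖ := by
          rw [hJ₀]
          exact hlip z (hsub hz) p₀ (Metric.mem_closedBall_self zero_le_one)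
        have h2 : ‖z - p₀‖ ≤ t := by simpa [dist_eq_norm] using hz
        exact h1.trans (by nlinarith))
      (Metric.mem_closedBall_self ht0) hmem
    have heq : (fun q => F q - J₀ q) p - (fun q => F q - J₀ q) p₀ = r := by
      simp only [hr]; abel
    calc ‖r‖ = ‖(fun q => F q - J₀ q) p - (fun q => F q - J₀ q) p₀‖ := by rw [heq]
      _ ≤ K * t * ‖p - p₀‖ := key
      _ = K * t * t := by rw [← ht]
  set a : EuclideanSpace ℝ (Fin 3) := F p₀ - x₀ with ha
  set b : EuclideanSpace ℝ (Fin 3) := J₀ (p - p₀) with hb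
  have hFp : F p - x₀ = (a + b) + r := by
    simp only [hr, ha, hb, map_sub]; abel
  have hab : ⟪a, b⟫_ℝ = 0 := horth _
  have e1 : ‖F p - x₀‖ ^ 2 = ‖a + b‖ ^ 2 + 2 * ⟪a + b, r⟫_ℝ + ‖r‖ ^ 2 := by
    rw [hFp, norm_add_sq_real]
  have e2 : ‖a + b‖ ^ 2 = h ^ 2 + ‖b‖ ^ 2 := by
    rw [norm_add_sq_real, hab, hh]; ring
  have e3 : ⟪a + b, r⟫_ℝ = ⟪a, r⟫_ℝ + ⟪b, r⟫_ℝ := inner_add_left _ _ _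
  have key : ‖F p - x₀‖ ^ 2 - ‖b‖ ^ 2 - h ^ 2 = 2 * ⟪a, r⟫_ℝ + 2 * ⟪b, r⟫_ℝ + ‖r‖ ^ 2 := by
    rw [e1, e2, e3]; ring
  have hbd1 : |⟪a, r⟫_ℝ| ≤ h * ‖r‖ := by
    calc |⟪a, r⟫_ℝ| ≤ ‖a‖ * ‖r‖ := abs_real_inner_le_norm _ _
      _ = h * ‖r‖ := by rw [ha, ← hh]
  have hr0 : 0 ≤ ‖r‖ := norm_nonneg _
  have hJ0 : (0:ℝ) ≤ ‖J₀‖ := norm_nonneg _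
  have hnb : ‖b‖ ≤ ‖J₀‖ * t := J₀.le_opNorm (p - p₀)
  have hbd2 : |⟪b, r⟫_ℝ| ≤ (‖J₀‖ * t) * ‖r‖ :=
    (abs_real_inner_le_norm _ _).trans (by nlinarith [norm_nonneg b])
  calc |‖F p - x₀‖ ^ 2 - ‖b‖ ^ 2 - h ^ 2|
      = |2 * ⟪a, r⟫_ℝ + 2 * ⟪b, r⟫_ℝ + ‖r‖ ^ 2| := by rw [key]
    _ ≤ 2 * |⟪a, r⟫_ℝ| + 2 * |⟪b, r⟫_ℝ| + ‖r‖ ^ 2 := by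
        have h1 := abs_add_three (2 * ⟪a, r⟫_ℝ) (2 * ⟪b, r⟫_ℝ) (‖r‖ ^ 2)
        rw [abs_mul, abs_mul, abs_two, abs_pow, abs_norm] at h1
        exact h1
    _ ≤ 2 * (h * ‖r‖) + 2 * ((‖J₀‖ * t) * ‖r‖) + ‖r‖ ^ 2 := by
        have := mul_self_le_mul_self hr0 hrb
        linarith [hbd1, hbd2]
    _ = (2 * h + 2 * ‖J₀‖ * t + ‖r‖) * ‖r‖ := by ring
    _ ≤ (2 * h + 2 * ‖J₀‖ * t + K * t * t) * (K * t * t) := by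
        have h2 : 2 * h + 2 * ‖J₀‖ * t + ‖r‖ ≤ 2 * h + 2 * ‖J₀‖ * t + K * t * t := by
          linarith
        exact mul_le_mul h2 hrb hr0 (by positivity)
    _ ≤ ((2 + 2 * ‖J₀‖ + K) * (h + t)) * (K * t * t) := by
        have hcoef : 2 * h + 2 * ‖J₀‖ * t + K * t * t ≤ (2 + 2 * ‖J₀‖ + K) * (h + t) := by
          nlinarith [mul_nonneg hK0 ht0, mul_nonneg hJ0 hh0, mul_nonneg hK0 hh0]
        exact mul_le_mul_of_nonneg_right hcoef (by positivity)
    _ ≤ (K * (K + 2 * ‖J₀‖ + 2) + 1) * (h + t) * t ^ 2 := by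
        have heq2 : ((2 + 2 * ‖J₀‖ + K) * (h + t)) * (K * t * t)
            = (K * (K + 2 * ‖J₀‖ + 2)) * ((h + t) * t ^ 2) := by ring
        have hpos : 0 ≤ (h + t) * t ^ 2 := by positivity
        have hre : (K * (K + 2 * ‖J₀‖ + 2) + 1) * (h + t) * t ^ 2
            = (K * (K + 2 * ‖J₀‖ + 2)) * ((h + t) * t ^ 2) + (h + t) * t ^ 2 := by ring
        rw [heq2, hre]
        linarith
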